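/- Let Ω be a bounded domain of ℝ^N, let r > 1, and let u, v : Ω → ℝ be differentiable with u ≥ 0 and v > 0 (Picone's identity and inequality): defining L_r(u,v) = |∇u|^r + (r-1)(u/v)^r |∇v|^r - r (u/v)^(r-1) |∇v|^(r-2) ∇v · ∇u and R_r(u,v) = |∇u|^r - |∇v|^(r-2) ∇v · ∇(u^r / v^(r-1)), one has L_r(u,v) = R_r(u,v) at every point, and L_r(u,v) ≥ 0. -/

import Mathlib

open scoped RealInnerProductSpace
open InnerProductSpace

/-- Picone's identity and inequality: for `r > 1`, `u ≥ 0` and `v > 0` differentiable on a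
bounded domain `Ω`, with
`L_r(u,v) = |∇u|^r + (r-1)(u/v)^r |∇v|^r - r (u/v)^(r-1) |∇v|^(r-2) ∇v ⬝ ∇u` and
`R_r(u,v) = |∇u|^r - |∇v|^(r-2) ∇v ⬝ ∇(u^r/v^(r-1))`, one has `L_r(u,v) = R_r(u,v)`
at every point of `Ω`, and `L_r(u,v) ≥ 0`. -/
theorem stmt16 (N : ℕ) (r : ℝ) (hr : 1 < r)
    (Ω : Set (EuclideanSpace ℝ (Fin N))) (hΩo : IsOpen Ω) (hΩb : Bornology.IsBounded Ω)
    (u v : EuclideanSpace ℝ (Fin N) → ℝ)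
    (hud : DifferentiableOn ℝ u Ω) (hvd : DifferentiableOn ℝ v Ω)
    (hu0 : ∀ x ∈ Ω, 0 ≤ u x) (hv0 : ∀ x ∈ Ω, 0 < v x)
    (x : EuclideanSpace ℝ (Fin N)) (hx : x ∈ Ω) :
    ‖gradient u x‖ ^ r + (r - 1) * (u x / v x) ^ r * ‖gradient v x‖ ^ r -
        r * (u x / v x) ^ (r - 1) * ‖gradient v x‖ ^ (r - 2) *
          ⟪gradient v x, gradient u x⟫ =
      ‖gradient u x‖ ^ r - ‖gradient v x‖ ^ (r - 2) *
        ⟪gradient v x, gradient (fun y => u y ^ r / v y ^ (r - 1)) x⟫ ∧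
    0 ≤ ‖gradient u x‖ ^ r + (r - 1) * (u x / v x) ^ r * ‖gradient v x‖ ^ r -
        r * (u x / v x) ^ (r - 1) * ‖gradient v x‖ ^ (r - 2) *
          ⟪gradient v x, gradient u x⟫ := by
  have hux : 0 ≤ u x := hu0 x hx
  have hvx : 0 < v x := hv0 x hx
  have hU : DifferentiableAt ℝ u x := hud.differentiableAt (hΩo.mem_nhds hx)
  have hV : DifferentiableAt ℝ v x := hvd.differentiableAt (hΩo.mem_nhds hx)
  set a := gradient u x with ha
  set b := gradient v x with hb
  set t := u x / v x with htdef
  have ht : 0 ≤ t := div_nonneg hux hvx.le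
  have hr0 : r ≠ 0 := by linarith
  have hr1 : r - 1 ≠ 0 := by linarith
  -- gradient of the quotient
  have hG : HasGradientAt (fun y => u y ^ r / v y ^ (r - 1))
      ((r * t ^ (r - 1)) • a - ((r - 1) * t ^ r) • b) x := by
    have hFu : HasFDerivAt u (toDual ℝ _ a) x := hU.hasGradientAt.hasFDerivAt
    have hFv : HasFDerivAt v (toDual ℝ _ b) x := hV.hasGradientAt.hasFDerivAt
    have h1 : HasFDerivAt (fun y => u y ^ r)
        ((r * u x ^ (r - 1)) • toDual ℝ _ a) x := hFu.rpow_const (Or.inr hr.le)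
    have h2 : HasFDerivAt (fun y => v y ^ (-(r - 1)))
        ((-(r - 1) * v x ^ (-(r - 1) - 1)) • toDual ℝ _ b) x :=
      hFv.rpow_const (Or.inl hvx.ne')
    have h3 := h1.mul h2
    have hev : (fun y => u y ^ r / v y ^ (r - 1)) =ᶠ[nhds x]
        (fun y => u y ^ r * v y ^ (-(r - 1))) := by
      have : ∀ᶠ y in nhds x, 0 < v y :=
        ContinuousAt.eventually_lt continuousAt_const hV.continuousAt hvx
      filter_upwards [this] with y hy
      rw [Real.rpow_neg hy.le, div_eq_mul_inv]
    rw [hasGradientAt_iff_hasFDerivAt]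
    refine HasFDerivAt.congr_of_eventuallyEq ?_ hev
    convert h3 using 1
    case e'_9 => rfl
    case e'_11 => rfl
    rw [map_sub, map_smul, map_smul, smul_smul, smul_smul]
    have e1 : u x ^ r * (-(r - 1) * v x ^ (-(r - 1) - 1)) = -((r - 1) * t ^ r) := by
      rw [htdef, Real.div_rpow hux hvx.le, show -(r - 1) - 1 = -r by ring,
        Real.rpow_neg hvx.le]
      field_simp
    have e2 : v x ^ (-(r - 1)) * (r * u x ^ (r - 1)) = r * t ^ (r - 1) := by
      rw [htdef, Real.div_rpow hux hvx.le, Real.rpow_neg hvx.le]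
      field_simp
    rw [e1, e2, sub_eq_add_neg, add_comm, neg_smul]
  have hinner : ⟪b, gradient (fun y => u y ^ r / v y ^ (r - 1)) x⟫ =
      r * t ^ (r - 1) * ⟪b, a⟫ - (r - 1) * t ^ r * ‖b‖ ^ 2 := by
    rw [hG.gradient, inner_sub_right, real_inner_smul_right, real_inner_smul_right,
      real_inner_self_eq_norm_sq]
  have hbr : ‖b‖ ^ (r - 2) * ‖b‖ ^ 2 = ‖b‖ ^ r := by
    by_cases hb0 : ‖b‖ = 0
    · simp [hb0, Real.zero_rpow hr0]
    · have hbp : 0 < ‖b‖ := lt_of_le_of_ne (norm_nonneg _) (Ne.symm hb0)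
      rw [← Real.rpow_natCast ‖b‖ 2, ← Real.rpow_add hbp]
      norm_num
  constructor
  · rw [hinner]
    linear_combination (-(r - 1) * t ^ r) * hbr
  · by_cases hbz : b = 0
    · rw [hbz]
      simp [Real.zero_rpow hr0]
      positivity
    · have hbp : 0 < ‖b‖ := norm_pos_iff.mpr hbz
      have hmul : t ^ (r - 1) * ‖b‖ ^ (r - 1) = (t * ‖b‖) ^ (r - 1) :=
        (Real.mul_rpow ht (norm_nonneg b)).symm
      have hmulr : t ^ r * ‖b‖ ^ r = (t * ‖b‖) ^ r :=
        (Real.mul_rpow ht (norm_nonneg b)).symm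
      have hCb : ‖b‖ ^ (r - 2) * ‖b‖ = ‖b‖ ^ (r - 1) := by
        rw [← Real.rpow_add_one hbp.ne' (r - 2), show r - 2 + 1 = r - 1 by ring]
      have hconj : r.HolderConjugate (r / (r - 1)) := Real.HolderConjugate.conjExponent hr
      have hB : 0 ≤ t * ‖b‖ := mul_nonneg ht (norm_nonneg b)
      have hy : r * (‖a‖ * (t * ‖b‖) ^ (r - 1)) ≤ ‖a‖ ^ r + (r - 1) * (t * ‖b‖) ^ r := by
        have h := Real.young_inequality_of_nonneg (norm_nonneg a)
          (Real.rpow_nonneg hB (r - 1)) hconj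
        rw [← Real.rpow_mul hB, hconj.sub_one_mul_conj] at h
        have h' := mul_le_mul_of_nonneg_left h (show (0:ℝ) ≤ r by linarith)
        have e3 : r * (‖a‖ ^ r / r + (t * ‖b‖) ^ r / (r / (r - 1))) =
            ‖a‖ ^ r + (r - 1) * (t * ‖b‖) ^ r := by
          field_simp
        linarith
      have hIa : ⟪b, a⟫ ≤ ‖b‖ * ‖a‖ := real_inner_le_norm b a
      have hC : 0 ≤ r * t ^ (r - 1) * ‖b‖ ^ (r - 2) := by positivity
      have h1 : r * t ^ (r - 1) * ‖b‖ ^ (r - 2) * ⟪b, a⟫ ≤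
          r * t ^ (r - 1) * ‖b‖ ^ (r - 2) * (‖b‖ * ‖a‖) :=
        mul_le_mul_of_nonneg_left hIa hC
      have h2 : r * t ^ (r - 1) * ‖b‖ ^ (r - 2) * (‖b‖ * ‖a‖) =
          r * (‖a‖ * (t * ‖b‖) ^ (r - 1)) := by
        rw [← hmul, ← hCb]; ring
      have h3 : (r - 1) * (t * ‖b‖) ^ r = (r - 1) * (t ^ r * ‖b‖ ^ r) := by rw [hmulr]
      linarith
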